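/- Suppose $f$ is a nonnegative Radon measure on $(0,\infty)$ with $f((0,1)) = 0$ satisfying the two-sided averaged bounds $\frac{1}{z}\int_{[z/2,z]} f(dx) \le C_1 z^{-(\gamma+3)/2}$ for all $z > 0$ and $\frac{1}{z}\int_{(bz,z]} f(dx) \ge C_2 z^{-(\gamma+3)/2}$ for all $z \ge z_0$, where $0 < b < 1$, $C_1, C_2 > 0$, $z_0 \ge 1$. Then: (a) $\int_{(0,\infty)} x^{\mu} f(dx) < \infty$ for every $\mu < (\gamma+1)/2$, and (b) $\int_{(0,\infty)} x^{(\gamma+1)/2} f(dx) = \infty$. -/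

import Mathlib

open MeasureTheory Set

theorem stmt_15 (γ b C1 C2 z0 : ℝ) (hb0 : 0 < b) (hb1 : b < 1)
    (hC1 : 0 < C1) (hC2 : 0 < C2) (hz0 : 1 ≤ z0)
    (f : Measure ℝ) [IsLocallyFiniteMeasure f]
    (hf01 : f (Set.Ioo 0 1) = 0)
    (hub : ∀ z : ℝ, 0 < z →
      f (Set.Icc (z / 2) z) ≤ ENNReal.ofReal (C1 * z ^ (-(γ + 3) / 2) * z))
    (hlb : ∀ z : ℝ, z0 ≤ z →
      ENNReal.ofReal (C2 * z ^ (-(γ + 3) / 2) * z) ≤ f (Set.Ioc (b * z) z)) :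
    (∀ μ : ℝ, μ < (γ + 1) / 2 →
      (∫⁻ x in Set.Ioi (0:ℝ), ENNReal.ofReal (x ^ μ) ∂f) ≠ ⊤) ∧
    (∫⁻ x in Set.Ioi (0:ℝ), ENNReal.ofReal (x ^ ((γ + 1) / 2)) ∂f) = ⊤ := by
  have h2pos : (0:ℝ) < 2 := two_pos
  have eadd : ∀ a c : ℝ, (2:ℝ) ^ a * (2:ℝ) ^ c = (2:ℝ) ^ (a + c) :=
    fun a c => (Real.rpow_add h2pos a c).symm
  constructor
  · -- Part (a)
    intro μ hμ
    set ν : ℝ := (γ + 1) / 2 with hν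
    -- split off (0,1)
    have hsub : Set.Ioi (0:ℝ) ⊆ Set.Ioo 0 1 ∪ Set.Ici 1 := by
      intro x hx
      rcases lt_or_ge x 1 with h | h
      · exact Or.inl ⟨hx, h⟩
      · exact Or.inr h
    have hsplit : (∫⁻ x in Set.Ioi (0:ℝ), ENNReal.ofReal (x ^ μ) ∂f)
        ≤ (∫⁻ x in Set.Ioo (0:ℝ) 1, ENNReal.ofReal (x ^ μ) ∂f)
          + ∫⁻ x in Set.Ici (1:ℝ), ENNReal.ofReal (x ^ μ) ∂f :=
      le_trans (lintegral_mono_set hsub) (lintegral_union_le _ _ _)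
    have h01 : (∫⁻ x in Set.Ioo (0:ℝ) 1, ENNReal.ofReal (x ^ μ) ∂f) = 0 :=
      setLIntegral_measure_zero _ _ hf01
    -- dyadic cover of [1, ∞)
    have hcover : Set.Ici (1:ℝ) ⊆ ⋃ n : ℕ, Set.Icc ((2:ℝ)^n) ((2:ℝ)^(n+1)) := by
      intro x hx
      have hx0 : (0:ℝ) < x := lt_of_lt_of_le one_pos hx
      set n := ⌊Real.logb 2 x⌋₊ with hn
      have hlog0 : 0 ≤ Real.logb 2 x := Real.logb_nonneg one_lt_two hx
      have hfl : (n:ℝ) ≤ Real.logb 2 x := Nat.floor_le hlog0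
      have hfu : Real.logb 2 x < (n:ℝ) + 1 := Nat.lt_floor_add_one _
      have hxlog : (2:ℝ) ^ Real.logb 2 x = x := Real.rpow_logb h2pos (by norm_num) hx0
      refine Set.mem_iUnion.2 ⟨n, ?_, ?_⟩
      · calc (2:ℝ)^n = (2:ℝ) ^ (n:ℝ) := (Real.rpow_natCast 2 n).symm
          _ ≤ (2:ℝ) ^ Real.logb 2 x := Real.rpow_le_rpow_of_exponent_le one_le_two hfl
          _ = x := hxlog
      · calc x = (2:ℝ) ^ Real.logb 2 x := hxlog.symm
          _ ≤ (2:ℝ) ^ ((n:ℝ) + 1) :=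
              Real.rpow_le_rpow_of_exponent_le one_le_two hfu.le
          _ = (2:ℝ) ^ (n+1) := by
              rw [← Real.rpow_natCast 2 (n+1)]; push_cast; ring_nf
    -- geometric data
    set r : ℝ := (2:ℝ) ^ (μ - ν) with hr
    have hr0 : 0 < r := Real.rpow_pos_of_pos h2pos _
    have hr1 : r < 1 :=
      Real.rpow_lt_one_of_one_lt_of_neg one_lt_two (sub_neg.2 hμ)
    set K : ℝ := C1 * (2:ℝ) ^ |μ| with hK
    have hKpos : 0 < K := mul_pos hC1 (Real.rpow_pos_of_pos h2pos _)
    -- per-interval bound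
    have key : ∀ n : ℕ, (∫⁻ x in Set.Icc ((2:ℝ)^n) ((2:ℝ)^(n+1)), ENNReal.ofReal (x ^ μ) ∂f)
        ≤ ENNReal.ofReal (K * r ^ (n+1)) := by
      intro n
      set T : ℝ := (n:ℝ) + 1 with hT
      have hzT : ((2:ℝ):ℝ) ^ ((n+1:ℕ):ℝ) = (2:ℝ)^(n+1) := Real.rpow_natCast 2 (n+1)
      have hznpow : (2:ℝ)^(n+1) = (2:ℝ) ^ T := by
        rw [← hzT]; push_cast; ring_nf; rw [hT, add_comm]
      have hzn : (2:ℝ)^n = (2:ℝ) ^ ((n:ℝ)) := (Real.rpow_natCast 2 n).symm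
      have hzpos : (0:ℝ) < (2:ℝ)^(n+1) := by positivity
      have hznpos : (0:ℝ) < (2:ℝ)^n := by positivity
      -- pointwise bound
      have hpt : ∀ x ∈ Set.Icc ((2:ℝ)^n) ((2:ℝ)^(n+1)),
          ENNReal.ofReal (x ^ μ) ≤ ENNReal.ofReal ((2:ℝ) ^ (T * μ + |μ|)) := by
        intro x hx
        have hx0 : (0:ℝ) < x := lt_of_lt_of_le hznpos hx.1
        refine ENNReal.ofReal_le_ofReal ?_
        rcases le_or_gt 0 μ with hμ0 | hμ0
        · calc x ^ μ ≤ ((2:ℝ)^(n+1)) ^ μ := Real.rpow_le_rpow hx0.le hx.2 hμ0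
            _ = (2:ℝ) ^ (T * μ) := by
                rw [hznpow, ← Real.rpow_mul h2pos.le]
            _ ≤ (2:ℝ) ^ (T * μ + |μ|) :=
                Real.rpow_le_rpow_of_exponent_le one_le_two
                  (le_add_of_nonneg_right (abs_nonneg _))
        · calc x ^ μ ≤ ((2:ℝ)^n) ^ μ :=
              Real.rpow_le_rpow_of_nonpos hznpos hx.1 hμ0.le
            _ = (2:ℝ) ^ (T * μ + |μ|) := by
                rw [hzn, ← Real.rpow_mul h2pos.le]
                congr 1
                rw [abs_of_neg hμ0, hT]; ring
      calc (∫⁻ x in Set.Icc ((2:ℝ)^n) ((2:ℝ)^(n+1)), ENNReal.ofReal (x ^ μ) ∂f)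
          ≤ ∫⁻ _ in Set.Icc ((2:ℝ)^n) ((2:ℝ)^(n+1)),
              ENNReal.ofReal ((2:ℝ) ^ (T * μ + |μ|)) ∂f :=
            setLIntegral_mono' measurableSet_Icc hpt
        _ = ENNReal.ofReal ((2:ℝ) ^ (T * μ + |μ|)) * f (Set.Icc ((2:ℝ)^n) ((2:ℝ)^(n+1))) :=
            setLIntegral_const _ _
        _ ≤ ENNReal.ofReal ((2:ℝ) ^ (T * μ + |μ|)) *
              ENNReal.ofReal (C1 * ((2:ℝ)^(n+1)) ^ (-(γ + 3) / 2) * ((2:ℝ)^(n+1))) := by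
            gcongr
            have h2 : ((2:ℝ)^(n+1)) / 2 = (2:ℝ)^n := by
              rw [pow_succ]; field_simp
            have := hub ((2:ℝ)^(n+1)) hzpos
            rwa [h2] at this
        _ = ENNReal.ofReal (K * r ^ (n+1)) := by
            rw [← ENNReal.ofReal_mul (by positivity)]
            congr 1
            have hrn : r ^ (n+1) = (2:ℝ) ^ ((μ - ν) * T) := by
              rw [hr, ← Real.rpow_natCast ((2:ℝ) ^ (μ - ν)) (n+1),
                ← Real.rpow_mul h2pos.le]
              congr 1
              push_cast [hT]; ring
            rw [hrn, hznpow, ← Real.rpow_mul h2pos.le, hK]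
            rw [show (2:ℝ) ^ (T * μ + |μ|) * (C1 * (2:ℝ) ^ (T * (-(γ + 3) / 2)) * (2:ℝ) ^ T)
                = C1 * ((2:ℝ) ^ (T * μ + |μ|) * (2:ℝ) ^ (T * (-(γ + 3) / 2)) * (2:ℝ) ^ T) by ring]
            rw [eadd, eadd]
            rw [show C1 * (2:ℝ) ^ |μ| * (2:ℝ) ^ ((μ - ν) * T)
                = C1 * ((2:ℝ) ^ |μ| * (2:ℝ) ^ ((μ - ν) * T)) by ring, eadd]
            congr 1
            congr 1
            rw [hν]; ring
    -- summability
    have hsum : Summable (fun n : ℕ => K * r ^ (n+1)) := by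
      have h := (summable_geometric_of_lt_one hr0.le hr1).mul_left (K * r)
      refine h.congr fun n => ?_
      rw [pow_succ]; ring
    have htail : (∫⁻ x in Set.Ici (1:ℝ), ENNReal.ofReal (x ^ μ) ∂f) ≠ ⊤ := by
      have h1 : (∫⁻ x in Set.Ici (1:ℝ), ENNReal.ofReal (x ^ μ) ∂f)
          ≤ ∑' n : ℕ, ∫⁻ x in Set.Icc ((2:ℝ)^n) ((2:ℝ)^(n+1)), ENNReal.ofReal (x ^ μ) ∂f :=
        le_trans (lintegral_mono_set hcover) (lintegral_iUnion_le _ _)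
      have h2 : (∑' n : ℕ, ∫⁻ x in Set.Icc ((2:ℝ)^n) ((2:ℝ)^(n+1)), ENNReal.ofReal (x ^ μ) ∂f)
          ≤ ∑' n : ℕ, ENNReal.ofReal (K * r ^ (n+1)) := ENNReal.tsum_le_tsum key
      have h3 : (∑' n : ℕ, ENNReal.ofReal (K * r ^ (n+1))) ≠ ⊤ := by
        rw [← ENNReal.ofReal_tsum_of_nonneg (fun n => by positivity) hsum]
        exact ENNReal.ofReal_ne_top
      exact ne_top_of_le_ne_top h3 (le_trans h1 h2)
    refine ne_top_of_le_ne_top ?_ hsplit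
    rw [h01, zero_add]
    exact htail
  · -- Part (b)
    set ν : ℝ := (γ + 1) / 2 with hν
    set a : ℕ → ℝ := fun k => z0 * b * (b⁻¹) ^ k with ha
    have hbinv : 1 < b⁻¹ := (one_lt_inv₀ hb0).2 hb1
    have hz0pos : 0 < z0 := lt_of_lt_of_le one_pos hz0
    have hapos : ∀ k, 0 < a k := fun k => by
      have : (0:ℝ) < (b⁻¹) ^ k := pow_pos (inv_pos.2 hb0) k
      positivity
    have hasucc : ∀ k, a (k+1) = z0 * (b⁻¹) ^ k := by
      intro k
      rw [ha]
      simp only [pow_succ]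
      field_simp
    have hmul : ∀ k, b * a (k+1) = a k := by
      intro k
      rw [hasucc k, ha]; ring
    have hage : ∀ k, z0 ≤ a (k+1) := by
      intro k
      rw [hasucc k]
      have h1 : (1:ℝ) ≤ (b⁻¹) ^ k := one_le_pow₀ hbinv.le
      nlinarith
    have hmono : StrictMono a := by
      refine strictMono_nat_of_lt_succ fun k => ?_
      rw [ha]
      have : (b⁻¹:ℝ) ^ k < (b⁻¹) ^ (k+1) :=
        pow_lt_pow_right₀ hbinv (Nat.lt_succ_self k)
      have hzb : 0 < z0 * b := mul_pos hz0pos hb0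
      exact (mul_lt_mul_iff_right₀ hzb).2 this
    -- the disjoint intervals
    set I : ℕ → Set ℝ := fun k => Set.Ioc (a k) (a (k+1)) with hI
    have hIdisj : Pairwise (Function.onFun Disjoint I) := by
      intro i j hij
      have key : ∀ i j : ℕ, i < j → Disjoint (I i) (I j) := by
        intro i j h
        refine Set.Ioc_disjoint_Ioc.2 ?_
        calc min (a (i+1)) (a (j+1)) ≤ a (i+1) := min_le_left _ _
          _ ≤ a j := hmono.monotone (by omega)
          _ ≤ max (a i) (a j) := le_max_right _ _
      rcases hij.lt_or_gt with h | h
      · exact key i j h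
      · exact (key j i h).symm
    have hImeas : ∀ k, MeasurableSet (I k) := fun k => measurableSet_Ioc
    have hIsub : (⋃ k, I k) ⊆ Set.Ioi (0:ℝ) := by
      intro x hx
      rcases Set.mem_iUnion.1 hx with ⟨k, hk⟩
      exact lt_trans (hapos k) hk.1
    -- per interval lower bound
    have hC : (0:ℝ) < b ^ |ν| * C2 :=
      mul_pos (Real.rpow_pos_of_pos hb0 _) hC2
    have key : ∀ k : ℕ, ENNReal.ofReal (b ^ |ν| * C2)
        ≤ ∫⁻ x in I k, ENNReal.ofReal (x ^ ν) ∂f := by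
      intro k
      set z : ℝ := a (k+1) with hz
      have hzpos : 0 < z := hapos (k+1)
      have hzge : z0 ≤ z := hage k
      have hflb : ENNReal.ofReal (C2 * z ^ (-ν)) ≤ f (I k) := by
        have h := hlb z hzge
        have hexp : C2 * z ^ (-(γ + 3) / 2) * z = C2 * z ^ (-ν) := by
          rw [mul_assoc, show z ^ (-(γ + 3) / 2) * z = z ^ (-(γ + 3) / 2) * z ^ (1:ℝ) by
            rw [Real.rpow_one], ← Real.rpow_add hzpos]
          congr 2
          rw [hν]; ring
        rw [hexp] at h
        have hIk : I k = Set.Ioc (b * z) z := by simp only [hI]; rw [← hmul k]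
        rwa [hIk]
      have hpt : ∀ x ∈ I k,
          ENNReal.ofReal (b ^ |ν| * z ^ ν) ≤ ENNReal.ofReal (x ^ ν) := by
        intro x hx
        have hbz : b * z = a k := hmul k
        have hx1 : a k < x := hx.1
        have hx2 : x ≤ z := hx.2
        have hx0 : 0 < x := lt_trans (hapos k) hx1
        refine ENNReal.ofReal_le_ofReal ?_
        rcases le_or_gt 0 ν with hν0 | hν0
        · rw [abs_of_nonneg hν0]
          calc b ^ ν * z ^ ν = (b * z) ^ ν := (Real.mul_rpow hb0.le hzpos.le).symm
            _ ≤ x ^ ν := by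
                refine Real.rpow_le_rpow (by positivity) ?_ hν0
                rw [hbz]; exact hx1.le
        · rw [abs_of_neg hν0]
          have h1 : b ^ (-ν) ≤ 1 :=
            Real.rpow_le_one hb0.le hb1.le (neg_nonneg.2 hν0.le)
          calc b ^ (-ν) * z ^ ν ≤ 1 * z ^ ν := by
                have : (0:ℝ) ≤ z ^ ν := (Real.rpow_pos_of_pos hzpos _).le
                nlinarith
            _ = z ^ ν := one_mul _
            _ ≤ x ^ ν := Real.rpow_le_rpow_of_nonpos hx0 hx2 hν0.le
      calc ENNReal.ofReal (b ^ |ν| * C2)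
          = ENNReal.ofReal (b ^ |ν| * z ^ ν) * ENNReal.ofReal (C2 * z ^ (-ν)) := by
            rw [← ENNReal.ofReal_mul (by positivity)]
            congr 1
            rw [show b ^ |ν| * z ^ ν * (C2 * z ^ (-ν))
                = b ^ |ν| * C2 * (z ^ ν * z ^ (-ν)) by ring,
              ← Real.rpow_add hzpos, add_neg_cancel, Real.rpow_zero, mul_one]
        _ ≤ ENNReal.ofReal (b ^ |ν| * z ^ ν) * f (I k) := by gcongr
        _ = ∫⁻ _ in I k, ENNReal.ofReal (b ^ |ν| * z ^ ν) ∂f :=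
            (setLIntegral_const _ _).symm
        _ ≤ ∫⁻ x in I k, ENNReal.ofReal (x ^ ν) ∂f :=
            setLIntegral_mono' (hImeas k) hpt
    -- conclude
    have hbig : (⊤:ENNReal) ≤ ∫⁻ x in Set.Ioi (0:ℝ), ENNReal.ofReal (x ^ ν) ∂f := by
      calc (⊤:ENNReal) = ∑' (_ : ℕ), ENNReal.ofReal (b ^ |ν| * C2) :=
            (ENNReal.tsum_const_eq_top_of_ne_zero (by
              simp [ENNReal.ofReal_eq_zero, not_le, hC])).symm
        _ ≤ ∑' k : ℕ, ∫⁻ x in I k, ENNReal.ofReal (x ^ ν) ∂f :=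
            ENNReal.tsum_le_tsum key
        _ = ∫⁻ x in ⋃ k, I k, ENNReal.ofReal (x ^ ν) ∂f :=
            (lintegral_iUnion hImeas hIdisj _).symm
        _ ≤ ∫⁻ x in Set.Ioi (0:ℝ), ENNReal.ofReal (x ^ ν) ∂f :=
            lintegral_mono_set hIsub
    exact top_le_iff.1 hbig
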